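/- Let γ ≥ 0, τ₁, τ₂ with 0 < τ₁ < 1 < τ₂, τ₀ = 2/(τ₁+τ₂) ≤ 1, and for ω ∈ ℝ define ζ₁(ω) = √((1-τ₂ω)² + (1-ω)²γ²)/√(1+γ²) and ζ₂(ω) = √((1-τ₁ω)² + (1-ω)²γ²)/√(1+γ²). Then min over ω ∈ ℝ of max{ζ₁(ω), ζ₂(ω)} equals min over ω ∈ [τ₀, ∞) of ζ₁(ω). -/

import Mathlib

theorem stmt_17 (γ τ₁ τ₂ : ℝ) (hγ : 0 ≤ γ)
    (h₁ : 0 < τ₁) (h₂ : τ₁ < 1) (h₃ : 1 < τ₂)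
    (h₀ : 2 / (τ₁ + τ₂) ≤ 1) :
    let ζ₁ : ℝ → ℝ := fun ω =>
      Real.sqrt ((1 - τ₂ * ω) ^ 2 + (1 - ω) ^ 2 * γ ^ 2) / Real.sqrt (1 + γ ^ 2)
    let ζ₂ : ℝ → ℝ := fun ω =>
      Real.sqrt ((1 - τ₁ * ω) ^ 2 + (1 - ω) ^ 2 * γ ^ 2) / Real.sqrt (1 + γ ^ 2)
    sInf (Set.range fun ω => max (ζ₁ ω) (ζ₂ ω)) =
      sInf (ζ₁ '' Set.Ici (2 / (τ₁ + τ₂))) := by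
  intro ζ₁ ζ₂
  set τ₀ : ℝ := 2 / (τ₁ + τ₂) with hτ₀
  have hs : 0 < τ₁ + τ₂ := by linarith
  have hτ₀pos : 0 < τ₀ := by positivity
  have hsτ : (τ₁ + τ₂) * τ₀ = 2 := by
    rw [hτ₀]; field_simp
  have hγ2 : (0:ℝ) < Real.sqrt (1 + γ ^ 2) := Real.sqrt_pos.mpr (by positivity)
  -- nonnegativity of values
  have hζnn : ∀ ω, 0 ≤ ζ₁ ω := fun ω => div_nonneg (Real.sqrt_nonneg _) (Real.sqrt_nonneg _)
  have hζ2nn : ∀ ω, 0 ≤ ζ₂ ω := fun ω => div_nonneg (Real.sqrt_nonneg _) (Real.sqrt_nonneg _)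
  -- for ω ≥ τ₀ : ζ₂ ω ≤ ζ₁ ω
  have key1 : ∀ ω, τ₀ ≤ ω → ζ₂ ω ≤ ζ₁ ω := by
    intro ω hω
    apply (div_le_div_iff_of_pos_right hγ2).mpr
    apply Real.sqrt_le_sqrt
    have h2 : 2 ≤ (τ₁ + τ₂) * ω := by
      calc (2:ℝ) = (τ₁ + τ₂) * τ₀ := hsτ.symm
      _ ≤ (τ₁ + τ₂) * ω := by nlinarith
    have hωpos : 0 ≤ ω := hτ₀pos.le.trans hω
    nlinarith [mul_nonneg (mul_nonneg (by linarith : (0:ℝ) ≤ (τ₁ + τ₂) * ω - 2) hωpos) (by linarith : (0:ℝ) ≤ τ₂ - τ₁)]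
  -- for ω ≤ τ₀ : ζ₂ τ₀ ≤ ζ₂ ω
  have key2 : ∀ ω, ω ≤ τ₀ → ζ₂ τ₀ ≤ ζ₂ ω := by
    intro ω hω
    apply (div_le_div_iff_of_pos_right hγ2).mpr
    apply Real.sqrt_le_sqrt
    have hτ₀1 : τ₀ ≤ 1 := h₀
    have h1 : 0 ≤ 1 - τ₁ * τ₀ := by nlinarith
    have h2 : 1 - τ₁ * τ₀ ≤ 1 - τ₁ * ω := by nlinarith
    have h3 : 0 ≤ 1 - τ₀ := by linarith
    have h4 : 1 - τ₀ ≤ 1 - ω := by linarith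
    have e1 : (1 - τ₁ * τ₀)^2 ≤ (1 - τ₁ * ω)^2 := by nlinarith
    have e2 : (1 - τ₀)^2 ≤ (1 - ω)^2 := by nlinarith
    nlinarith [sq_nonneg γ]
  -- at τ₀ : ζ₁ τ₀ = ζ₂ τ₀
  have keyeq : ζ₁ τ₀ = ζ₂ τ₀ := by
    have : 1 - τ₂ * τ₀ = -(1 - τ₁ * τ₀) := by
      have : τ₂ * τ₀ + τ₁ * τ₀ = 2 := by nlinarith
      linarith
    simp only [ζ₁, ζ₂, this, neg_sq]
  have hbdd1 : BddBelow (Set.range fun ω => max (ζ₁ ω) (ζ₂ ω)) := by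
    refine ⟨0, ?_⟩
    rintro x ⟨ω, rfl⟩
    exact le_max_of_le_left (hζnn ω)
  have hbdd2 : BddBelow (ζ₁ '' Set.Ici τ₀) := by
    refine ⟨0, ?_⟩
    rintro x ⟨ω, _, rfl⟩
    exact hζnn ω
  have hne1 : (Set.range fun ω => max (ζ₁ ω) (ζ₂ ω)).Nonempty := ⟨_, ⟨0, rfl⟩⟩
  have hne2 : (ζ₁ '' Set.Ici τ₀).Nonempty := ⟨_, ⟨τ₀, Set.mem_Ici.mpr le_rfl, rfl⟩⟩
  apply le_antisymm
  · apply le_csInf hne2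
    rintro b ⟨ω, hω, rfl⟩
    have : max (ζ₁ ω) (ζ₂ ω) = ζ₁ ω := max_eq_left (key1 ω hω)
    calc sInf (Set.range fun ω => max (ζ₁ ω) (ζ₂ ω)) ≤ max (ζ₁ ω) (ζ₂ ω) :=
          csInf_le hbdd1 ⟨ω, rfl⟩
      _ = ζ₁ ω := this
  · apply le_csInf hne1
    rintro b ⟨ω, rfl⟩
    rcases le_total τ₀ ω with hω | hω
    · calc sInf (ζ₁ '' Set.Ici τ₀) ≤ ζ₁ ω := csInf_le hbdd2 ⟨ω, hω, rfl⟩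
        _ ≤ max (ζ₁ ω) (ζ₂ ω) := le_max_left _ _
    · calc sInf (ζ₁ '' Set.Ici τ₀) ≤ ζ₁ τ₀ := csInf_le hbdd2 ⟨τ₀, Set.mem_Ici.mpr le_rfl, rfl⟩
        _ = ζ₂ τ₀ := keyeq
        _ ≤ ζ₂ ω := key2 ω hω
        _ ≤ max (ζ₁ ω) (ζ₂ ω) := le_max_right _ _
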